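/- Let $\mu$ be a measure that is not purely atomic, and $1\le p<\infty$. Then the lattice homomorphisms $L_p(\mu)\to\mathbb{R}$ do not separate the points of $L_p(\mu)$: every lattice homomorphism $\phi: L_p(\mu)\to\mathbb{R}$ vanishes on all functions supported on the non-atomic part of the measure space. -/

import Mathlib

open MeasureTheory Filter Set
open scoped ENNReal Topology

section Aux

variable {α : Type*} [MeasurableSpace α]

lemma aux_exists_half (ν : Measure α) (t : Set α)
    (hsplit : ∀ u, u ⊆ t → MeasurableSet u → 0 < ν u →
      ∃ w, w ⊆ u ∧ MeasurableSet w ∧ 0 < ν w ∧ ν w < ν u)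
    {u : Set α} (hu : u ⊆ t) (hmu : MeasurableSet u) (hpos : 0 < ν u) :
    ∃ w, w ⊆ u ∧ MeasurableSet w ∧ 0 < ν w ∧ 2 * ν w ≤ ν u := by
  obtain ⟨w, hwu, hwm, hw0, hwlt⟩ := hsplit u hu hmu hpos
  rcases le_or_gt (2 * ν w) (ν u) with h | h
  · exact ⟨w, hwu, hwm, hw0, h⟩
  · refine ⟨u \ w, diff_subset, hmu.diff hwm, ?_, ?_⟩
    · rw [measure_diff hwu hwm.nullMeasurableSet (hwlt.trans_le le_top).ne]
      exact tsub_pos_of_lt hwlt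
    · rw [measure_diff hwu hwm.nullMeasurableSet (hwlt.trans_le le_top).ne, two_mul]
      have h2 : ν u ≤ ν w + ν w := by rw [two_mul] at h; exact h.le
      calc ν u - ν w + (ν u - ν w) ≤ ν w + (ν u - ν w) := by
            gcongr; exact tsub_le_iff_right.2 h2
        _ = ν u := add_tsub_cancel_of_le hwlt.le

lemma aux_exists_small (ν : Measure α) (t : Set α)
    (hsplit : ∀ u, u ⊆ t → MeasurableSet u → 0 < ν u →
      ∃ w, w ⊆ u ∧ MeasurableSet w ∧ 0 < ν w ∧ ν w < ν u)
    {u : Set α} (hu : u ⊆ t) (hmu : MeasurableSet u) (hpos : 0 < ν u) (hfin : ν u ≠ ∞)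
    {δ : ℝ≥0∞} (hδ : 0 < δ) :
    ∃ w, w ⊆ u ∧ MeasurableSet w ∧ 0 < ν w ∧ ν w ≤ δ := by
  rcases eq_or_ne δ ∞ with rfl | hδtop
  · exact ⟨u, Subset.rfl, hmu, hpos, le_top⟩
  have key : ∀ n : ℕ, ∃ w, w ⊆ u ∧ MeasurableSet w ∧ 0 < ν w ∧ 2 ^ n * ν w ≤ ν u := by
    intro n
    induction n with
    | zero => exact ⟨u, Subset.rfl, hmu, hpos, by simp⟩
    | succ n ih =>
      obtain ⟨w, hwu, hwm, hw0, hwle⟩ := ih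
      obtain ⟨z, hzw, hzm, hz0, hzle⟩ := aux_exists_half ν t hsplit (hwu.trans hu) hwm hw0
      refine ⟨z, hzw.trans hwu, hzm, hz0, ?_⟩
      calc (2:ℝ≥0∞) ^ (n+1) * ν z = 2 ^ n * (2 * ν z) := by ring
        _ ≤ 2 ^ n * ν w := by gcongr
        _ ≤ ν u := hwle
  -- choose n with ν u ≤ 2 ^ n * δ
  obtain ⟨n, hn⟩ : ∃ n : ℕ, ν u ≤ 2 ^ n * δ := by
    obtain ⟨m, hm⟩ := ENNReal.exists_nat_gt (ENNReal.div_lt_top hfin hδ.ne').ne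
    refine ⟨m, ?_⟩
    have h1 : ν u / δ ≤ 2 ^ m := le_trans hm.le (by exact_mod_cast Nat.le_of_lt (Nat.lt_two_pow_self (n := m)))
    rwa [ENNReal.div_le_iff hδ.ne' hδtop] at h1
  obtain ⟨w, hwu, hwm, hw0, hwle⟩ := key n
  refine ⟨w, hwu, hwm, hw0, ?_⟩
  have h2 : (2:ℝ≥0∞) ^ n * ν w ≤ 2 ^ n * δ := hwle.trans hn
  exact (ENNReal.mul_le_mul_iff_right (by positivity) (by simp)).mp h2


lemma aux_partition (ν : Measure α) (t : Set α) (ht : MeasurableSet t)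
    (hsplit : ∀ u, u ⊆ t → MeasurableSet u → 0 < ν u →
      ∃ w, w ⊆ u ∧ MeasurableSet w ∧ 0 < ν w ∧ ν w < ν u)
    (hfin : ν t ≠ ∞) {δ : ℝ≥0∞} (hδ : 0 < δ) (hδtop : δ ≠ ∞) :
    ∃ (n : ℕ) (w : ℕ → Set α), (∀ k, MeasurableSet (w k)) ∧ (∀ k, w k ⊆ t) ∧
      Pairwise (Function.onFun Disjoint w) ∧ (∀ k, ν (w k) ≤ δ) ∧
      ν (t \ ⋃ k < n, w k) ≤ δ := by
  classical
  set m : Set α → ℝ≥0∞ := fun r => sSup (ν '' {w | w ⊆ r ∧ MeasurableSet w ∧ ν w ≤ δ}) with hm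
  have hm_le : ∀ r, m r ≤ δ := by
    intro r
    apply sSup_le
    rintro b ⟨w, ⟨-, -, hw⟩, rfl⟩
    exact hw
  have hchoose : ∀ r : Set α, ∃ w, w ⊆ r ∧ MeasurableSet w ∧ ν w ≤ δ ∧ m r ≤ 2 * ν w := by
    intro r
    rcases eq_or_ne (m r) 0 with h0 | h0
    · exact ⟨∅, empty_subset _, MeasurableSet.empty, by simp [hδ.le], by simp [h0]⟩
    · have hlt : m r / 2 < m r :=
        ENNReal.half_lt_self h0 ((hm_le r).trans_lt hδtop.lt_top).ne
      obtain ⟨b, ⟨w, ⟨hw1, hw2, hw3⟩, rfl⟩, hb⟩ := lt_sSup_iff.mp hlt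
      refine ⟨w, hw1, hw2, hw3, ?_⟩
      have := (ENNReal.div_lt_iff (Or.inl two_ne_zero) (Or.inl ENNReal.ofNat_ne_top)).mp hb
      rw [mul_comm] at this
      exact this.le
  choose c hc1 hc2 hc3 hc4 using hchoose
  set R : ℕ → Set α := fun n => Nat.rec t (fun _ r => r \ c r) n with hR
  have hRs : ∀ n, R (n + 1) = R n \ c (R n) := fun n => rfl
  have hRM : ∀ n, MeasurableSet (R n) := by
    intro n; induction n with
    | zero => exact ht
    | succ n ih => exact ih.diff (hc2 _)
  have hmono : ∀ n, R (n + 1) ⊆ R n := fun n => diff_subset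
  have hanti : Antitone R := antitone_nat_of_succ_le hmono
  have hRt : ∀ n, R n ⊆ t := fun n => hanti (Nat.zero_le n)
  set w : ℕ → Set α := fun k => c (R k) with hw
  have hwm : ∀ k, MeasurableSet (w k) := fun k => hc2 _
  have hwt : ∀ k, w k ⊆ t := fun k => (hc1 _).trans (hRt k)
  have hkey : ∀ i j, i < j → Disjoint (w i) (w j) := by
    intro i j hij
    have : w j ⊆ R (i + 1) := (hc1 _).trans (hanti hij)
    rw [hRs i] at this
    exact Disjoint.mono_right this disjoint_sdiff_right
  have hdisj : Pairwise (Function.onFun Disjoint w) := by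
    intro i j hij
    rcases lt_or_gt_of_ne hij with h | h
    · exact hkey i j h
    · exact (hkey j i h).symm
  have hsum : ∑' k, ν (w k) ≠ ∞ := by
    rw [← measure_iUnion hdisj hwm]
    exact ((measure_mono (iUnion_subset hwt)).trans_lt hfin.lt_top).ne
  -- the residual set is null
  set Rω : Set α := t \ ⋃ k, w k with hRω
  have hRωm : MeasurableSet Rω := ht.diff (MeasurableSet.iUnion hwm)
  have hRωsub : ∀ n, Rω ⊆ R n := by
    intro n; induction n with
    | zero => exact diff_subset
    | succ n ih =>
      rw [hRs n]
      intro x hx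
      exact ⟨ih hx, fun hxc => hx.2 (mem_iUnion.mpr ⟨n, hxc⟩)⟩
  have hRω0 : ν Rω = 0 := by
    by_contra h0
    have hpos : 0 < ν Rω := pos_iff_ne_zero.mpr h0
    obtain ⟨z, hz1, hz2, hz3, hz4⟩ := aux_exists_small ν t hsplit diff_subset hRωm hpos
      ((measure_mono (diff_subset : Rω ⊆ t)).trans_lt hfin.lt_top).ne hδ
    have hzle : ∀ k, ν z ≤ 2 * ν (w k) := by
      intro k
      refine le_trans ?_ (hc4 (R k))
      exact le_sSup ⟨z, ⟨hz1.trans (hRωsub k), hz2, hz4⟩, rfl⟩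
    have htend : Tendsto (fun k => 2 * ν (w k)) atTop (𝓝 0) := by
      have h1 := ENNReal.tendsto_atTop_zero_of_tsum_ne_top hsum
      simpa using ENNReal.Tendsto.const_mul h1 (Or.inr ENNReal.ofNat_ne_top)
    have : ν z ≤ 0 := ge_of_tendsto' htend hzle
    exact hz3.ne' (le_antisymm this zero_le) 
  -- choose n with small tail
  obtain ⟨n, hn⟩ : ∃ n, ∑' k, ν (w (k + n)) ≤ δ := by
    obtain ⟨n, hn⟩ :=
      ((ENNReal.tendsto_sum_nat_add (fun k => ν (w k)) hsum).eventually_lt_const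
        hδ).exists
    exact ⟨n, hn.le⟩
  refine ⟨n, w, hwm, hwt, hdisj, fun k => hc3 _, ?_⟩
  have hsub : t \ (⋃ k < n, w k) ⊆ Rω ∪ ⋃ k, w (k + n) := by
    intro x hx
    by_cases hxU : x ∈ ⋃ k, w k
    · obtain ⟨j, hj⟩ := mem_iUnion.mp hxU
      have hjn : n ≤ j := by
        by_contra hlt
        exact hx.2 (mem_iUnion₂.mpr ⟨j, not_le.mp hlt, hj⟩)
      exact Or.inr (mem_iUnion.mpr ⟨j - n, by rwa [Nat.sub_add_cancel hjn]⟩)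
    · exact Or.inl ⟨hx.1, hxU⟩
  calc ν (t \ ⋃ k < n, w k) ≤ ν (Rω ∪ ⋃ k, w (k + n)) := measure_mono hsub
    _ ≤ ν Rω + ν (⋃ k, w (k + n)) := measure_union_le _ _
    _ ≤ 0 + ∑' k, ν (w (k + n)) := by rw [hRω0]; gcongr; exact measure_iUnion_le _
    _ ≤ δ := by simpa using hn


end Aux

lemma aux_key {α : Type*} [MeasurableSpace α] (μ : Measure α)
    (p : ℝ≥0∞) [Fact (1 ≤ p)] (hp : p ≠ ∞)
    (s : Set α) (hs : MeasurableSet s)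
    (hnonatomic : ∀ t : Set α, t ⊆ s → MeasurableSet t → 0 < μ t →
      ∃ u : Set α, u ⊆ t ∧ MeasurableSet u ∧ 0 < μ u ∧ μ u < μ t)
    (φ : Lp ℝ p μ →L[ℝ] ℝ)
    (hφlat : ∀ f g : Lp ℝ p μ, φ (f ⊔ g) = max (φ f) (φ g))
    (f : Lp ℝ p μ) (hf : ∀ᵐ a ∂μ, a ∉ s → (f : α → ℝ) a = 0)
    (hf0 : 0 ≤ᵐ[μ] (f : α → ℝ)) :
    φ f = 0 := by
  classical
  have hp0 : p ≠ 0 := (lt_of_lt_of_le zero_lt_one Fact.out).ne'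
  set q : ℝ := p.toReal with hqdef
  have hq : 0 < q := ENNReal.toReal_pos hp0 hp
  set g : α → ℝ≥0∞ := fun a => (‖f a‖₊ : ℝ≥0∞) ^ q with hgdef
  have hg : Measurable g :=
    ((Lp.stronglyMeasurable f).measurable.nnnorm.coe_nnreal_ennreal).pow_const q
  set ν : Measure α := μ.withDensity g with hνdef
  have hν_apply : ∀ {A : Set α}, MeasurableSet A → ν A = ∫⁻ a in A, g a ∂μ :=
    fun {A} hA => withDensity_apply g hA
  have hνfin : ν Set.univ ≠ ∞ := by
    rw [hν_apply MeasurableSet.univ, Measure.restrict_univ]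
    exact (lintegral_rpow_enorm_lt_top_of_eLpNorm_lt_top hp0 hp (Lp.eLpNorm_lt_top f)).ne
  -- eLpNorm of indicators
  have heLp : ∀ {A : Set α}, MeasurableSet A →
      eLpNorm (A.indicator (f : α → ℝ)) p μ = (ν A) ^ (1 / q) := by
    intro A hA
    rw [eLpNorm_indicator_eq_eLpNorm_restrict hA, eLpNorm_eq_lintegral_rpow_enorm_toReal hp0 hp,
      hν_apply hA]
    rfl
  -- ν vanishes outside s
  have hν0 : ν sᶜ = 0 := by
    rw [hν_apply hs.compl]
    have h1 : ∀ᵐ a ∂μ.restrict sᶜ, g a = 0 := by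
      rw [ae_restrict_iff' hs.compl]
      filter_upwards [hf] with a ha hac
      simp only [hgdef]
      rw [ha hac]
      simp [ENNReal.zero_rpow_of_pos hq]
    rw [lintegral_congr_ae h1, lintegral_zero]
  -- the splitting property for ν
  have hsplitν : ∀ u, u ⊆ s → MeasurableSet u → 0 < ν u →
      ∃ w, w ⊆ u ∧ MeasurableSet w ∧ 0 < ν w ∧ ν w < ν u := by
    intro t hts htm hνt
    have hex : ∃ n : ℕ, 0 < μ (t ∩ {a | ((n : ℝ≥0∞) + 1)⁻¹ ≤ g a}) := by
      by_contra hcon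
      push_neg at hcon
      simp only [le_zero_iff] at hcon
      have hE : μ (t ∩ {a | 0 < g a}) = 0 := by
        have hsub : t ∩ {a | 0 < g a} ⊆ ⋃ n : ℕ, t ∩ {a | ((n : ℝ≥0∞) + 1)⁻¹ ≤ g a} := by
          rintro a ⟨hat, hag⟩
          obtain ⟨n, hn⟩ := ENNReal.exists_inv_nat_lt hag.ne'
          refine mem_iUnion.mpr ⟨n, hat, ?_⟩
          calc ((n : ℝ≥0∞) + 1)⁻¹ ≤ ((n : ℝ≥0∞))⁻¹ := by gcongr; exact le_self_add
            _ ≤ g a := hn.le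
        exact le_antisymm (le_trans (measure_mono hsub)
          (le_trans (measure_iUnion_le _) (by simp [hcon]))) zero_le
      have hgt : ν t = 0 := by
        have hEm : MeasurableSet {a | 0 < g a} := hg measurableSet_Ioi
        have h2 : ν (t ∩ {a | 0 < g a}) = 0 := (withDensity_absolutelyContinuous μ g) hE
        have h3 : ν (t \ {a | 0 < g a}) = 0 := by
          rw [hν_apply (htm.diff hEm),
            setLIntegral_congr_fun (htm.diff hEm)
              (fun x hx => not_lt.mp hx.2 |> le_zero_iff.mp),
            lintegral_zero]
        refine le_antisymm ?_ zero_le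
        calc ν t ≤ ν ((t ∩ {a | 0 < g a}) ∪ (t \ {a | 0 < g a})) :=
              measure_mono (by rw [inter_union_diff])
          _ ≤ ν (t ∩ {a | 0 < g a}) + ν (t \ {a | 0 < g a}) := measure_union_le _ _
          _ = 0 := by rw [h2, h3, add_zero]
      exact hνt.ne' hgt
    obtain ⟨n, hn⟩ := hex
    set c : ℝ≥0∞ := ((n : ℝ≥0∞) + 1)⁻¹ with hcdef
    have hc0 : c ≠ 0 := ENNReal.inv_ne_zero.mpr (by simp)
    set A : Set α := t ∩ {a | c ≤ g a} with hAdef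
    have hAm : MeasurableSet A := htm.inter (hg measurableSet_Ici)
    obtain ⟨u, huA, hum, hμu, hμuA⟩ := hnonatomic A ((inter_subset_left).trans hts) hAm hn
    have hνu : 0 < ν u := by
      have h1 : c * μ u ≤ ν u := by
        rw [hν_apply hum, ← setLIntegral_const u c]
        exact setLIntegral_mono hg fun x hx => (huA hx).2
      exact lt_of_lt_of_le (ENNReal.mul_pos hc0 hμu.ne').bot_lt h1
    have hμAu : μ (A \ u) ≠ 0 := by
      intro h0
      have : μ A ≤ μ u := by
        calc μ A ≤ μ (u ∪ (A \ u)) := measure_mono (by intro x hx; by_cases hxu : x ∈ u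
                                                       · exact Or.inl hxu
                                                       · exact Or.inr ⟨hx, hxu⟩)
          _ ≤ μ u + μ (A \ u) := measure_union_le _ _
          _ = μ u := by rw [h0, add_zero]
      exact absurd this (not_le.mpr hμuA)
    have hνAu : 0 < ν (A \ u) := by
      have h1 : c * μ (A \ u) ≤ ν (A \ u) := by
        rw [hν_apply (hAm.diff hum), ← setLIntegral_const _ c]
        exact setLIntegral_mono hg fun x hx => hx.1.2
      exact lt_of_lt_of_le (ENNReal.mul_pos hc0 hμAu).bot_lt h1
    refine ⟨u, huA.trans inter_subset_left, hum, hνu, ?_⟩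
    have hle : ν u + ν (A \ u) ≤ ν t := by
      rw [← measure_union (disjoint_sdiff_right) (hAm.diff hum)]
      exact measure_mono (union_subset (huA.trans inter_subset_left)
        (diff_subset.trans inter_subset_left))
    calc ν u < ν u + ν (A \ u) :=
          ENNReal.lt_add_right ((measure_mono (subset_univ u)).trans_lt hνfin.lt_top).ne hνAu.ne'
      _ ≤ ν t := hle
  -- φ f is nonnegative
  have hφf0 : 0 ≤ φ f := by
    have h1 : (0 : Lp ℝ p μ) ≤ f := (Lp.coeFn_nonneg f).mp hf0
    have h2 : f ⊔ 0 = f := sup_eq_left.mpr h1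
    have h3 := hφlat f 0
    rw [h2, map_zero] at h3
    rw [h3]
    exact le_max_right _ _
  -- main estimate
  have hmain : ∀ ε : ℝ, 0 < ε → φ f ≤ ε := by
    intro ε hε
    set r : ℝ := ε / (2 * (‖φ‖ + 1)) with hrdef
    have hφ1 : (0:ℝ) < ‖φ‖ + 1 := by positivity
    have hr : 0 < r := by positivity
    set δ : ℝ≥0∞ := (ENNReal.ofReal r) ^ q with hδdef
    have hδ0 : 0 < δ := ENNReal.rpow_pos (ENNReal.ofReal_pos.mpr hr) ENNReal.ofReal_ne_top
    have hδtop : δ ≠ ∞ := ENNReal.rpow_ne_top_of_nonneg hq.le ENNReal.ofReal_ne_top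
    have hδr : δ ^ (1/q) = ENNReal.ofReal r := by
      rw [← ENNReal.rpow_mul, mul_one_div_cancel hq.ne', ENNReal.rpow_one]
    have hνs : ν s ≠ ∞ := ((measure_mono (subset_univ s)).trans_lt hνfin.lt_top).ne
    obtain ⟨n, w, hwm, hwt, hdisj, hwδ, htail⟩ := aux_partition ν s hs hsplitν hνs hδ0 hδtop
    have hnormbound : ∀ (h : Lp ℝ p μ) (A : Set α), MeasurableSet A →
        (h : α → ℝ) =ᵐ[μ] A.indicator (f : α → ℝ) → ν A ≤ δ → ‖h‖ ≤ r := by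
      intro h A hA hcoe hνA
      rw [Lp.norm_def, eLpNorm_congr_ae hcoe, heLp hA]
      calc ((ν A) ^ (1/q)).toReal ≤ (δ ^ (1/q)).toReal := by
            apply ENNReal.toReal_mono
            · rw [hδr]; exact ENNReal.ofReal_ne_top
            · exact ENNReal.rpow_le_rpow hνA (by positivity)
        _ = r := by rw [hδr, ENNReal.toReal_ofReal hr.le]
    have hφle : ∀ h : Lp ℝ p μ, φ h ≤ ‖φ‖ * ‖h‖ := by
      intro h
      calc φ h ≤ ‖φ h‖ := le_abs_self _
        _ ≤ ‖φ‖ * ‖h‖ := φ.le_opNorm h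
    set U : ℕ → Set α := fun k => ⋃ j < k, w j with hUdef
    have hUm : ∀ k, MeasurableSet (U k) := fun k =>
      MeasurableSet.biUnion (to_countable _) fun j _ => hwm j
    set G : ℕ → Lp ℝ p μ := fun k => MemLp.toLp _ ((Lp.memLp f).indicator (hUm k)) with hGdef
    set F : ℕ → Lp ℝ p μ := fun k => MemLp.toLp _ ((Lp.memLp f).indicator (hwm k)) with hFdef
    have hU0 : U 0 = ∅ := by simp [hUdef]
    have hG0 : G 0 = 0 := by
      apply Lp.ext
      refine (MemLp.coeFn_toLp _).trans ?_
      rw [hU0]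
      rw [Set.indicator_empty]
      exact (Lp.coeFn_zero ℝ p μ).symm
    have hdisjU : ∀ k, Disjoint (U k) (w k) := by
      intro k
      rw [Set.disjoint_left]
      rintro x hx hxk
      obtain ⟨j, hj, hxj⟩ := mem_iUnion₂.mp hx
      exact Set.disjoint_left.mp (hdisj (ne_of_lt hj)) hxj hxk
    have hGsucc : ∀ k, G (k+1) = G k ⊔ F k := by
      intro k
      apply Lp.ext
      have h1 : ((G (k+1) : Lp ℝ p μ) : α → ℝ) =ᵐ[μ] (U (k+1)).indicator (f : α → ℝ) := MemLp.coeFn_toLp _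
      have h2 : ((G k : Lp ℝ p μ) : α → ℝ) =ᵐ[μ] (U k).indicator (f : α → ℝ) := MemLp.coeFn_toLp _
      have h3 : ((F k : Lp ℝ p μ) : α → ℝ) =ᵐ[μ] (w k).indicator (f : α → ℝ) := MemLp.coeFn_toLp _
      have h4 := Lp.coeFn_sup (G k) (F k)
      filter_upwards [h1, h2, h3, h4, hf0] with a ha1 ha2 ha3 ha4 ha0
      simp only [Pi.zero_apply] at ha0
      rw [ha1, ha4]
      simp only [Pi.sup_apply]
      rw [ha2, ha3]
      have hU1 : U (k+1) = U k ∪ w k := Set.biUnion_lt_succ w k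
      rw [hU1]
      by_cases hA : a ∈ U k <;> by_cases hB : a ∈ w k
      · exact absurd hB (Set.disjoint_left.mp (hdisjU k) hA)
      · rw [Set.indicator_of_mem (mem_union_left _ hA), Set.indicator_of_mem hA,
          Set.indicator_of_notMem hB]
        exact (sup_eq_left.mpr ha0).symm
      · rw [Set.indicator_of_mem (mem_union_right _ hB), Set.indicator_of_notMem hA,
          Set.indicator_of_mem hB]
        exact (sup_eq_right.mpr ha0).symm
      · rw [Set.indicator_of_notMem (fun hx => hx.elim hA hB), Set.indicator_of_notMem hA,
          Set.indicator_of_notMem hB]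
        simp
    have hFb : ∀ k, φ (F k) ≤ ‖φ‖ * r := by
      intro k
      calc φ (F k) ≤ ‖φ‖ * ‖F k‖ := hφle _
        _ ≤ ‖φ‖ * r := mul_le_mul_of_nonneg_left
            (hnormbound _ _ (hwm k) (MemLp.coeFn_toLp _) (hwδ k)) (norm_nonneg φ)
    have hGb : ∀ k, φ (G k) ≤ ‖φ‖ * r := by
      intro k
      induction k with
      | zero =>
        rw [hG0, map_zero]
        positivity
      | succ k ih =>
        rw [hGsucc k, hφlat]
        exact max_le ih (hFb k)
    have hfG : φ f - φ (G n) ≤ ‖φ‖ * r := by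
      have h1 : ((f - G n : Lp ℝ p μ) : α → ℝ) =ᵐ[μ] (U n)ᶜ.indicator (f : α → ℝ) := by
        filter_upwards [Lp.coeFn_sub f (G n),
          (MemLp.coeFn_toLp _ : ((G n : Lp ℝ p μ) : α → ℝ) =ᵐ[μ] (U n).indicator (f : α → ℝ))] with a ha1 ha2
        rw [ha1, Set.indicator_compl]
        simp only [Pi.sub_apply]
        rw [ha2]
      have hνc : ν (U n)ᶜ ≤ δ := by
        calc ν (U n)ᶜ ≤ ν ((s \ U n) ∪ sᶜ) := measure_mono (by
              intro x hx
              by_cases hxs : x ∈ s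
              · exact Or.inl ⟨hxs, hx⟩
              · exact Or.inr hxs)
          _ ≤ ν (s \ U n) + ν sᶜ := measure_union_le _ _
          _ ≤ δ + 0 := by
              rw [hν0]
              gcongr
          _ = δ := add_zero δ
      calc φ f - φ (G n) = φ (f - G n) := (map_sub φ f (G n)).symm
        _ ≤ ‖φ‖ * ‖f - G n‖ := hφle _
        _ ≤ ‖φ‖ * r := mul_le_mul_of_nonneg_left
            (hnormbound _ _ (hUm n).compl h1 hνc) (norm_nonneg φ)
    have hb : φ f ≤ ‖φ‖ * r + ‖φ‖ * r := by
      have := hGb n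
      linarith
    have hre : 2 * (‖φ‖ + 1) * r = ε := by
      rw [hrdef]
      field_simp
    nlinarith [norm_nonneg φ, hr]
  by_contra hne
  have hpos : 0 < φ f := lt_of_le_of_ne hφf0 (Ne.symm hne)
  have := hmain (φ f / 2) (by linarith)
  linarith


/-- Real-valued lattice homomorphisms on `L_p(μ)` (`1 ≤ p < ∞`) vanish on all functions
supported on a non-atomic part `s` of the measure space; in particular, if `μ` is not
purely atomic, the lattice homomorphisms `L_p(μ) → ℝ` do not separate points. -/
theorem lattice_hom_vanishes_on_nonatomic_part
    {α : Type*} [MeasurableSpace α] (μ : Measure α)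
    (p : ℝ≥0∞) [Fact (1 ≤ p)] (hp : p ≠ ∞)
    (s : Set α) (hs : MeasurableSet s)
    (hnonatomic : ∀ t : Set α, t ⊆ s → MeasurableSet t → 0 < μ t →
      ∃ u : Set α, u ⊆ t ∧ MeasurableSet u ∧ 0 < μ u ∧ μ u < μ t)
    (φ : Lp ℝ p μ →L[ℝ] ℝ)
    (hφlat : ∀ f g : Lp ℝ p μ, φ (f ⊔ g) = max (φ f) (φ g))
    (f : Lp ℝ p μ) (hf : ∀ᵐ a ∂μ, a ∉ s → (f : α → ℝ) a = 0) :
    φ f = 0 := by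
  have hsub : f = Lp.posPart f - Lp.negPart f := by
    apply Lp.ext
    filter_upwards [Lp.coeFn_sub (Lp.posPart f) (Lp.negPart f), Lp.coeFn_posPart f,
      Lp.coeFn_negPart_eq_max f] with a h1 h2 h3
    rw [h1]
    simp only [Pi.sub_apply]
    rw [h2, h3, max_zero_sub_max_neg_zero_eq_self]
  have hpos : φ (Lp.posPart f) = 0 := by
    apply aux_key μ p hp s hs hnonatomic φ hφlat
    · filter_upwards [hf, Lp.coeFn_posPart f] with a h1 h2 h3
      rw [h2, h1 h3]
      simp
    · filter_upwards [Lp.coeFn_posPart f] with a h2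
      rw [Pi.zero_apply, h2]
      exact le_max_right _ _
  have hneg : φ (Lp.negPart f) = 0 := by
    apply aux_key μ p hp s hs hnonatomic φ hφlat
    · filter_upwards [hf, Lp.coeFn_negPart_eq_max f] with a h1 h2 h3
      rw [h2, h1 h3]
      simp
    · filter_upwards [Lp.coeFn_negPart_eq_max f] with a h2
      rw [Pi.zero_apply, h2]
      exact le_max_right _ _
  calc φ f = φ (Lp.posPart f - Lp.negPart f) := by rw [← hsub]
    _ = φ (Lp.posPart f) - φ (Lp.negPart f) := map_sub φ _ _
    _ = 0 := by rw [hpos, hneg, sub_zero]
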